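/- If k : X × X → ℝ is a positive definite kernel on a type X, then the kernel exp ∘ k : X × X → ℝ defined by (exp ∘ k)(x, y) = exp(k(x, y)) is a positive definite kernel on X. -/

import Mathlib

/-- A positive definite kernel on a type `X`: symmetric and positive definite. -/
def IsPosDefKernel {X : Type*} (k : X × X → ℝ) : Prop :=
  (∀ x y : X, k (x, y) = k (y, x)) ∧
  ∀ (n : ℕ) (x : Fin n → X) (c : Fin n → ℝ),
    0 ≤ ∑ i, ∑ j, c i * c j * k (x i, x j)

/-- Entrywise powers of a Gram-type expression have nonnegative quadratic form. -/
lemma aux_pow_nonneg {n : ℕ} (B : Matrix (Fin n) (Fin n) ℝ) (c : Fin n → ℝ) (m : ℕ) :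
    0 ≤ ∑ i, ∑ j, c i * c j * (∑ l, B l i * B l j) ^ m := by
  have expand : ∀ i j : Fin n, (∑ l, B l i * B l j) ^ m
      = ∑ g : Fin m → Fin n, (∏ t, B (g t) i) * (∏ t, B (g t) j) := by
    intro i j
    have : (∑ l, B l i * B l j) ^ m = ∏ _t : Fin m, (∑ l, B l i * B l j) := by
      simp
    rw [this, Finset.prod_univ_sum]
    simp [Fintype.piFinset_univ, Finset.prod_mul_distrib]
  calc (0:ℝ) ≤ ∑ g : Fin m → Fin n, (∑ i, c i * ∏ t, B (g t) i) ^ 2 :=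
        Finset.sum_nonneg fun g _ => sq_nonneg _
    _ = ∑ i, ∑ j, c i * c j * (∑ l, B l i * B l j) ^ m := by
        simp_rw [expand, sq, Finset.sum_mul_sum, Finset.mul_sum]
        rw [Finset.sum_comm]
        refine Finset.sum_congr rfl fun i _ => ?_
        rw [Finset.sum_comm]
        refine Finset.sum_congr rfl fun j _ => ?_
        refine Finset.sum_congr rfl fun g _ => ?_
        ring

/-- The exponential of a positive definite kernel is a positive definite kernel. -/
theorem isPosDefKernel_exp {X : Type*} (k : X × X → ℝ) (h : IsPosDefKernel k) :
    IsPosDefKernel (fun p : X × X => Real.exp (k p)) := by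
  obtain ⟨hsymm, hpd⟩ := h
  refine ⟨fun x y => by simp [hsymm x y], fun n x c => ?_⟩
  -- the Gram matrix is positive semidefinite
  set M : Matrix (Fin n) (Fin n) ℝ := Matrix.of fun i j => k (x i, x j) with hM
  have hMpsd : M.PosSemidef := by
    rw [Matrix.posSemidef_iff_dotProduct_mulVec]
    constructor
    · ext i j
      simp [Matrix.IsHermitian, M, hsymm]
    · intro v
      have := hpd n x v
      simp only [dotProduct, Matrix.mulVec, dotProduct, star, M]
      convert this using 1
      · rfl
      refine Finset.sum_congr rfl fun i _ => ?_
      rw [Finset.mul_sum]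
      refine Finset.sum_congr rfl fun j _ => ?_
      simp [Matrix.of_apply]
      ring
  obtain ⟨B, hB⟩ : ∃ B : Matrix (Fin n) (Fin n) ℝ, M = B.conjTranspose * B := by
    open scoped MatrixOrder in
    exact CStarAlgebra.nonneg_iff_eq_star_mul_self.mp hMpsd.nonneg
  have hk : ∀ i j : Fin n, k (x i, x j) = ∑ l, B l i * B l j := by
    intro i j
    have : M i j = (B.conjTranspose * B) i j := by rw [hB]
    simpa [Matrix.mul_apply, Matrix.conjTranspose_apply, M] using this
  -- expand exp as a series and swap with the finite sums
  have hsum : ∀ i j : Fin n,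
      Summable (fun m : ℕ => c i * c j * ((k (x i, x j)) ^ m / m.factorial)) :=
    fun i j => (Real.summable_pow_div_factorial _).mul_left _
  have key : ∑ i, ∑ j, c i * c j * Real.exp (k (x i, x j))
      = ∑' m : ℕ, ∑ i, ∑ j, c i * c j * ((k (x i, x j)) ^ m / m.factorial) := by
    rw [Summable.tsum_finsetSum (fun i _ => summable_sum (fun j _ => hsum i j))]
    refine Finset.sum_congr rfl fun i _ => ?_
    rw [Summable.tsum_finsetSum (fun j _ => hsum i j)]
    refine Finset.sum_congr rfl fun j _ => ?_
    rw [tsum_mul_left, Real.exp_eq_exp_ℝ, NormedSpace.exp_eq_tsum_div]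
  show 0 ≤ ∑ i, ∑ j, c i * c j * Real.exp (k (x i, x j))
  rw [key]
  refine tsum_nonneg fun m => ?_
  have : ∑ i, ∑ j, c i * c j * ((k (x i, x j)) ^ m / m.factorial)
      = (∑ i, ∑ j, c i * c j * (∑ l, B l i * B l j) ^ m) / m.factorial := by
    rw [Finset.sum_div]
    refine Finset.sum_congr rfl fun i _ => ?_
    rw [Finset.sum_div]
    refine Finset.sum_congr rfl fun j _ => ?_
    rw [hk]
    ring
  rw [this]
  exact div_nonneg (aux_pow_nonneg B c m) (by positivity)
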